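/- For every n ≥ 1, the formula φ_n is provable in natural deduction for M→, i.e., there is a derivation of φ_n with no open assumptions. -/
import Mathlib


/-- Formulas of purely implicational logic, built from atoms (numbered by `ℕ`)
by the single connective `→` (`impl`). -/
inductive Fm : Type
  | atom : ℕ → Fm
  | impl : Fm → Fm → Fm
deriving DecidableEq

/-- χ[X,Y] = (((X → Y) → X) → X) → Y. -/
def chi (X Y : Fm) : Fm := (((X.impl Y).impl X).impl X).impl Y

/-- The atom `Fm.atom 0` is C, and `Fm.atom k` is D_k for k ≥ 1.
ξ₁ = χ[D₁, C] and ξ_{i+1} = χ[D_{i+1}, ξ_i]  (the value at 0 is irrelevant). -/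
def xi : ℕ → Fm
  | 0 => chi (.atom 1) (.atom 0)
  | 1 => chi (.atom 1) (.atom 0)
  | n + 2 => chi (.atom (n + 2)) (xi (n + 1))

/-- φ_n = ξ_n → C. -/
def phi (n : ℕ) : Fm := (xi n).impl (.atom 0)

/-- Natural deduction derivations for M→, indexed by the multiset of open
assumption occurrences and the conclusion.  `assume a` is a one-occurrence
assumption of `a`; `intro n` is →-introduction discharging exactly `n`
occurrences of the assumption `a`; `elim` is →-elimination whose second
premise (the implication) is the major premise. -/
inductive Deriv : Multiset Fm → Fm → Type
  | assume (a : Fm) : Deriv {a} a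
  | intro {Γ : Multiset Fm} {a b : Fm} (n : ℕ)
      (d : Deriv (Γ + Multiset.replicate n a) b) : Deriv Γ (a.impl b)
  | elim {Γ Δ : Multiset Fm} {a b : Fm}
      (minor : Deriv Γ a) (major : Deriv Δ (a.impl b)) : Deriv (Γ + Δ) b

/-- The last rule of the derivation is an →-introduction. -/
def Deriv.isIntro : ∀ {Γ b}, Deriv Γ b → Prop
  | _, _, .intro _ _ => True
  | _, _, _ => False

/-- A derivation is normal if no formula occurrence is both the conclusion of
an →-introduction and the major premise of an →-elimination. -/
def Deriv.normal : ∀ {Γ b}, Deriv Γ b → Prop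
  | _, _, .assume _ => True
  | _, _, .intro _ d => d.normal
  | _, _, .elim minor major => minor.normal ∧ major.normal ∧ ¬ major.isIntro

def Deriv.cast {Γ Γ' : Multiset Fm} (h : Γ = Γ') {b : Fm} (d : Deriv Γ b) :
    Deriv Γ' b := h ▸ d

/-- `λh. h (λq. q (λd. h (λ_. d)))  :  χ[X,Y] → Y`. -/
def chiDeriv (X Y : Fm) : Deriv 0 ((chi X Y).impl Y) := by
  set c := chi X Y with hc
  set p := ((X.impl Y).impl X).impl X with hp
  -- λr. d : p  (from d : X)
  have d1 : Deriv {X} p := .intro 0 ((Deriv.assume X).cast (by simp))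
  -- h (λr. d) : Y, context {X, c}
  have d2 : Deriv ({X} + {c}) Y := .elim d1 (Deriv.assume c)
  -- f = λd. h (λr. d) : X → Y, context {c}
  have d3 : Deriv {c} (X.impl Y) :=
    .intro 1 (d2.cast (by simp [Multiset.replicate_one]; exact Multiset.cons_swap _ _ _))
  -- q f : X, context {c, (X→Y)→X}
  have d4 : Deriv ({c} + {(X.impl Y).impl X}) X := .elim d3 (.assume _)
  -- λq. q f : p, context {c}
  have d5 : Deriv {c} p :=
    .intro 1 (d4.cast (by simp [Multiset.replicate_one]))
  -- h (λq. q f) : Y, context {c, c}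
  have d6 : Deriv ({c} + {c}) Y := .elim d5 (.assume c)
  exact .intro 2 (d6.cast (by
    show ({c} + {c} : Multiset Fm) = 0 + (c ::ₘ c ::ₘ 0)
    simp))

/-- composition: from ⊢ a → b and ⊢ b → e get ⊢ a → e -/
def Deriv.comp {a b e : Fm} (f : Deriv 0 (a.impl b)) (g : Deriv 0 (b.impl e)) :
    Deriv 0 (a.impl e) := by
  have d1 : Deriv ({a} + 0) b := .elim (.assume a) f
  have d2 : Deriv (({a} + 0) + 0) e := .elim d1 g
  exact .intro 1 (d2.cast (by simp [Multiset.replicate_one]))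

def phiDeriv : (n : ℕ) → Deriv 0 (phi (n + 1))
  | 0 => chiDeriv (.atom 1) (.atom 0)
  | n + 1 => (chiDeriv (.atom (n + 2)) (xi (n + 1))).comp (phiDeriv n)

/-- for every n ≥ 1, φ_n is provable in natural deduction for
M→, i.e. there is a derivation of φ_n with no open assumptions. -/
theorem phi_provable (n : ℕ) (hn : 1 ≤ n) :
    Nonempty (Deriv (0 : Multiset Fm) (phi n)) := by
  obtain ⟨m, rfl⟩ := Nat.exists_eq_add_of_le hn
  exact ⟨(Nat.add_comm 1 m) ▸ phiDeriv m⟩
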